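/- Let a, b, c, d be real numbers with ac ≠ 0, x_A = −b/a, x_B = −d/c, and let z = x + iy be a non-real complex number (y ≠ 0) with A(z)·Δ(z) ≠ 0, where A(z) = az+b and Δ(z) = A(z)² + 4(cz+d). Then |A(z) + √(Δ(z))| = |A(z) − √(Δ(z))| if and only if (x − x_B)² + y² = (x_A − x_B)² and (x − x_A)(x − x_A + 2c/a²) < 0. -/

import Mathlib

lemma L1' (A w : ℂ) : ‖A + w‖ = ‖A - w‖ ↔
    (A * (starRingEnd ℂ) w).re = 0 := by
  constructor
  · intro h
    have h2 : Complex.normSq (A + w) = Complex.normSq (A - w) := by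
      rw [← Complex.sq_norm, ← Complex.sq_norm, h]
    rw [Complex.normSq_add, Complex.normSq_sub] at h2
    linarith
  · intro h
    rw [Complex.norm_def, Complex.norm_def, Complex.normSq_add, Complex.normSq_sub, h]
    ring_nf


lemma L2' (A w : ℂ) (hA : A ≠ 0) (hw : w ≠ 0) :
    (A * (starRingEnd ℂ) w).re = 0 ↔ ((w / A) ^ 2).im = 0 ∧ ((w / A) ^ 2).re < 0 := by
  have hq : w / A ≠ 0 := div_ne_zero hw hA
  have hns : 0 < Complex.normSq A := Complex.normSq_pos.mpr hA
  have step1 : w * (starRingEnd ℂ) A = (w / A) * (Complex.normSq A : ℂ) := by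
    rw [← Complex.mul_conj]
    field_simp
  have key : (A * (starRingEnd ℂ) w).re = (w / A).re * Complex.normSq A := by
    have e : w * (starRingEnd ℂ) A = (starRingEnd ℂ) (A * (starRingEnd ℂ) w) := by
      simp [map_mul, mul_comm]
    rw [show (A * (starRingEnd ℂ) w).re = (w * (starRingEnd ℂ) A).re by
      rw [e, Complex.conj_re], step1]
    simp [Complex.mul_re]
  rw [key]
  set q := w / A with hqdef
  have him : (q ^ 2).im = 2 * q.re * q.im := by rw [sq, Complex.mul_im]; ring
  have hre : (q ^ 2).re = q.re ^ 2 - q.im ^ 2 := by rw [sq, Complex.mul_re]; ring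
  rw [him, hre]
  constructor
  · intro h
    have h0 : q.re = 0 := by
      rcases mul_eq_zero.mp h with h | h
      · exact h
      · exact absurd h hns.ne'
    have h1 : q.im ≠ 0 := by
      intro h1; exact hq (Complex.ext h0 h1)
    refine ⟨by rw [h0]; ring, ?_⟩
    have : 0 < q.im ^ 2 := by positivity
    nlinarith
  · rintro ⟨h1, h2⟩
    have h0 : q.re = 0 := by
      by_contra hr
      have : q.im = 0 := by
        rcases mul_eq_zero.mp h1 with h | h
        · rcases mul_eq_zero.mp h with h | h
          · norm_num at h
          · exact absurd h hr
        · exact h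
      nlinarith [sq_nonneg q.re]
    rw [h0]; ring


lemma Lreal' (a c u v y : ℝ) (ha : a ≠ 0) (hc : c ≠ 0) (hy : y ≠ 0) :
    (4 * c * a ^ 2 * y * (u ^ 2 - y ^ 2 - 2 * u * v) = 0 ∧
      a ^ 4 * (u ^ 2 + y ^ 2) ^ 2 + 4 * c * a ^ 2 * (v * (u ^ 2 - y ^ 2) + 2 * u * y ^ 2) < 0)
    ↔ (v ^ 2 + y ^ 2 = (v - u) ^ 2 ∧ u * (u + 2 * c / a ^ 2) < 0) := by
  have h4 : (4 : ℝ) * c * a ^ 2 * y ≠ 0 := by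
    exact mul_ne_zero (mul_ne_zero (mul_ne_zero (by norm_num) hc) (pow_ne_zero 2 ha)) hy
  have ha2 : (0:ℝ) < a ^ 2 := by positivity
  have hmul : u * (a ^ 2 * u + 2 * c) = (u * (u + 2 * c / a ^ 2)) * a ^ 2 := by
    field_simp
  constructor
  · rintro ⟨e1, e2⟩
    have hy2 : y ^ 2 = u ^ 2 - 2 * u * v := by
      rcases mul_eq_zero.mp e1 with h | h
      · exact absurd h h4
      · linarith
    have hypos : 0 < y ^ 2 := by positivity
    have huv : u - v ≠ 0 := by
      intro h
      have hv : v = u := by linarith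
      subst hv
      nlinarith
    have key : a ^ 4 * (u ^ 2 + y ^ 2) ^ 2 + 4 * c * a ^ 2 * (v * (u ^ 2 - y ^ 2) + 2 * u * y ^ 2)
        = 4 * a ^ 2 * (u - v) ^ 2 * (u * (a ^ 2 * u + 2 * c)) := by
      linear_combination (a ^ 4 * (y ^ 2 - u ^ 2 + 2 * u * v) + 4 * a ^ 4 * u * (u - v)
        + 4 * c * a ^ 2 * (2 * u - v)) * hy2
    refine ⟨by linear_combination hy2, ?_⟩
    have hs : u * (a ^ 2 * u + 2 * c) < 0 := by
      rw [key] at e2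
      have hpos : 0 < 4 * a ^ 2 * (u - v) ^ 2 := by positivity
      nlinarith
    rw [hmul] at hs
    nlinarith
  · rintro ⟨e1, e2⟩
    have hy2 : y ^ 2 = u ^ 2 - 2 * u * v := by nlinarith
    have hypos : 0 < y ^ 2 := by positivity
    have huv : u - v ≠ 0 := by
      intro h
      have hv : v = u := by linarith
      subst hv
      nlinarith
    have hs : u * (a ^ 2 * u + 2 * c) < 0 := by
      rw [hmul]
      exact mul_neg_of_neg_of_pos e2 ha2
    constructor
    · linear_combination (-(4 * c * a ^ 2 * y)) * hy2
    · have key : a ^ 4 * (u ^ 2 + y ^ 2) ^ 2 + 4 * c * a ^ 2 * (v * (u ^ 2 - y ^ 2) + 2 * u * y ^ 2)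
          = 4 * a ^ 2 * (u - v) ^ 2 * (u * (a ^ 2 * u + 2 * c)) := by
        linear_combination (a ^ 4 * (y ^ 2 - u ^ 2 + 2 * u * v) + 4 * a ^ 4 * u * (u - v)
          + 4 * c * a ^ 2 * (2 * u - v)) * hy2
      rw [key]
      have hpos : 0 < 4 * a ^ 2 * (u - v) ^ 2 := by positivity
      exact mul_neg_of_pos_of_neg hpos hs


theorem stmt_6 (a b c d x y : ℝ) (h : a * c ≠ 0) (hy : y ≠ 0)
    (hAD : ((a : ℂ) * ((x : ℂ) + (y : ℂ) * Complex.I) + (b : ℂ))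
        * (((a : ℂ) * ((x : ℂ) + (y : ℂ) * Complex.I) + (b : ℂ)) ^ 2
          + 4 * ((c : ℂ) * ((x : ℂ) + (y : ℂ) * Complex.I) + (d : ℂ))) ≠ 0) :
    (‖(((a : ℂ) * ((x : ℂ) + (y : ℂ) * Complex.I) + (b : ℂ))
        + (((a : ℂ) * ((x : ℂ) + (y : ℂ) * Complex.I) + (b : ℂ)) ^ 2
            + 4 * ((c : ℂ) * ((x : ℂ) + (y : ℂ) * Complex.I) + (d : ℂ))) ^ ((1 : ℂ) / 2))‖ =
      ‖(((a : ℂ) * ((x : ℂ) + (y : ℂ) * Complex.I) + (b : ℂ))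
        - (((a : ℂ) * ((x : ℂ) + (y : ℂ) * Complex.I) + (b : ℂ)) ^ 2
            + 4 * ((c : ℂ) * ((x : ℂ) + (y : ℂ) * Complex.I) + (d : ℂ))) ^ ((1 : ℂ) / 2))‖)
    ↔ ((x - (-d / c)) ^ 2 + y ^ 2 = ((-b / a) - (-d / c)) ^ 2 ∧
        (x - (-b / a)) * (x - (-b / a) + 2 * c / a ^ 2) < 0) := by
  have ha : a ≠ 0 := fun h' => h (by rw [h', zero_mul])
  have hc : c ≠ 0 := fun h' => h (by rw [h', mul_zero])
  set A : ℂ := (a : ℂ) * ((x : ℂ) + (y : ℂ) * Complex.I) + (b : ℂ) with hA_def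
  set D : ℂ := A ^ 2 + 4 * ((c : ℂ) * ((x : ℂ) + (y : ℂ) * Complex.I) + (d : ℂ)) with hD_def
  have hA : A ≠ 0 := left_ne_zero_of_mul hAD
  have hD : D ≠ 0 := right_ne_zero_of_mul hAD
  set w : ℂ := D ^ ((1 : ℂ) / 2) with hw_def
  have hw : w ≠ 0 := by
    rw [hw_def]
    simp [Complex.cpow_eq_zero_iff, hD]
  have hw2 : w ^ 2 = D := by
    rw [hw_def, sq, ← Complex.cpow_add _ _ hD]
    norm_num
  rw [L1' A w, L2' A w hA hw, show (w / A) ^ 2 = D / A ^ 2 by rw [div_pow, hw2]]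
  -- components
  have hAre : A.re = a * x + b := by simp [hA_def]
  have hAim : A.im = a * y := by simp [hA_def]
  have h2re : (A ^ 2).re = (a * x + b) ^ 2 - (a * y) ^ 2 := by
    rw [sq, Complex.mul_re, hAre, hAim]; ring
  have h2im : (A ^ 2).im = 2 * (a * x + b) * (a * y) := by
    rw [sq, Complex.mul_im, hAre, hAim]; ring
  have hDre : D.re = ((a * x + b) ^ 2 - (a * y) ^ 2) + 4 * (c * x + d) := by
    rw [hD_def, Complex.add_re, h2re]
    simp [Complex.mul_re, Complex.add_re, Complex.mul_im, Complex.add_im]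
  have hDim : D.im = 2 * (a * x + b) * (a * y) + 4 * c * y := by
    rw [hD_def, Complex.add_im, h2im]
    simp [Complex.mul_re, Complex.add_re, Complex.mul_im, Complex.add_im]
    ring
  have hns : 0 < Complex.normSq (A ^ 2) := Complex.normSq_pos.mpr (pow_ne_zero 2 hA)
  rw [Complex.div_im, Complex.div_re, div_sub_div_same, ← add_div]
  have k1 : (D.im * (A ^ 2).re - D.re * (A ^ 2).im) / Complex.normSq (A ^ 2) = 0 ↔
      D.im * (A ^ 2).re - D.re * (A ^ 2).im = 0 := by
    rw [div_eq_zero_iff, or_iff_left hns.ne']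
  have k2 : (D.re * (A ^ 2).re + D.im * (A ^ 2).im) / Complex.normSq (A ^ 2) < 0 ↔
      D.re * (A ^ 2).re + D.im * (A ^ 2).im < 0 := by
    constructor
    · intro hlt
      by_contra h'
      push_neg at h'
      exact absurd (div_nonneg h' hns.le) (not_le.mpr hlt)
    · intro hlt
      exact div_neg_of_neg_of_pos hlt hns
  rw [k1, k2, h2re, h2im, hDre, hDim]
  have e1 : x - (-d / c) = x + d / c := by ring
  have e2 : (-b / a) - (-d / c) = (x + d / c) - (x + b / a) := by ring
  have e3 : x - (-b / a) = x + b / a := by ring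
  have Eim : (2 * (a * x + b) * (a * y) + 4 * c * y) * ((a * x + b) ^ 2 - (a * y) ^ 2)
      - ((a * x + b) ^ 2 - (a * y) ^ 2 + 4 * (c * x + d)) * (2 * (a * x + b) * (a * y))
      = 4 * c * a ^ 2 * y * ((x + b / a) ^ 2 - y ^ 2 - 2 * (x + b / a) * (x + d / c)) := by
    field_simp [ha, hc]
    ring
  have Ere : ((a * x + b) ^ 2 - (a * y) ^ 2 + 4 * (c * x + d)) * ((a * x + b) ^ 2 - (a * y) ^ 2)
      + (2 * (a * x + b) * (a * y) + 4 * c * y) * (2 * (a * x + b) * (a * y))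
      = a ^ 4 * ((x + b / a) ^ 2 + y ^ 2) ^ 2 + 4 * c * a ^ 2 *
        ((x + d / c) * ((x + b / a) ^ 2 - y ^ 2) + 2 * (x + b / a) * y ^ 2) := by
    field_simp [ha, hc]
    ring
  rw [e1, e2, e3, Eim, Ere]
  exact Lreal' a c (x + b / a) (x + d / c) y ha hc hy
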